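/- Let g = ⊕_{i ≥ -h} g_i be a transitive, irreducible Z-graded Lie algebra with g_{-i} = g_{-1}^i for i ≥ 1 and g generated by its local part. If σ is a grading-preserving Hom-Lie algebra structure on g with σ|_{g_0 ⊕ g_{-1}} = id, then σ = id on all of g. -/
import Mathlib


/-- If a grading-preserving Hom-Lie structure on a transitive irreducible `ℤ`-graded Lie
algebra, with `g₋ᵢ = g₋₁ⁱ`, is the identity on `g₀ ⊕ g₋₁`, then it is the identity. -/
theorem stmt4 {K L : Type*} [Field K] [LieRing L] [LieAlgebra K L]
    (g : ℤ → Submodule K L) (h : ℕ)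
    (hint : DirectSum.IsInternal g)
    (hlow : ∀ i : ℤ, i < -(h : ℤ) → g i = ⊥)
    (hgrade : ∀ i j : ℤ, ∀ x ∈ g i, ∀ y ∈ g j, ⁅x, y⁆ ∈ g (i + j))
    (htrans : ∀ i : ℤ, 0 ≤ i → ∀ x ∈ g i, (∀ y ∈ g (-1), ⁅x, y⁆ = 0) → x = 0)
    (hgen : ∀ i : ℕ, 2 ≤ i →
      g (-(i : ℤ)) = Submodule.span K
        {z : L | ∃ x ∈ g (-1), ∃ y ∈ g (-(i : ℤ) + 1), z = ⁅x, y⁆})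
    (hirr : g (-1) = Submodule.span K
      {z : L | ∃ x ∈ g 0, ∃ y ∈ g (-1), z = ⁅x, y⁆})
    (σ : L →ₗ[K] L)
    (hmul : ∀ x y : L, σ ⁅x, y⁆ = ⁅σ x, σ y⁆)
    (hjac : ∀ x y z : L, ⁅σ x, ⁅y, z⁆⁆ + ⁅σ y, ⁅z, x⁆⁆ + ⁅σ z, ⁅x, y⁆⁆ = 0)
    (hpres : ∀ i : ℤ, ∀ x ∈ g i, σ x ∈ g i)
    (hid0 : ∀ x ∈ g 0, σ x = x) (hid1 : ∀ x ∈ g (-1), σ x = x) :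
    ∀ x : L, σ x = x := by
  have hneg : ∀ n : ℕ, 1 ≤ n → ∀ x ∈ g (-(n : ℤ)), σ x = x := by
    intro n hn
    induction n, hn using Nat.le_induction with
    | base => intro x hx; exact hid1 x (by simpa using hx)
    | succ n hn ih =>
      intro x hx
      have hgeq := hgen (n + 1) (by omega)
      have harg : (-(((n : ℕ) + 1 : ℕ) : ℤ) + 1) = -(n : ℤ) := by push_cast; ring
      rw [hgeq] at hx
      induction hx using Submodule.span_induction with
      | mem z hz =>
        obtain ⟨a, ha, b, hb, rfl⟩ := hz
        rw [harg] at hb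
        rw [hmul, hid1 a ha, ih b hb]
      | zero => simp
      | add u v _ _ hu hv => rw [map_add, hu, hv]
      | smul c u _ hu => rw [map_smul, hu]
  have hpos : ∀ i : ℤ, 0 ≤ i → ∀ x ∈ g i, σ x = x := by
    intro i hi x hx
    have hd : σ x - x ∈ g i := Submodule.sub_mem _ (hpres i x hx) hx
    have hz : ∀ w ∈ g (-1), ⁅σ x - x, w⁆ = 0 := by
      intro w hw
      rw [hirr] at hw
      induction hw using Submodule.span_induction with
      | mem z hz =>
        obtain ⟨a, ha, b, hb, rfl⟩ := hz
        have h1 := hjac x a b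
        rw [hid0 a ha, hid1 b hb] at h1
        have h2 : ⁅x, ⁅a, b⁆⁆ + ⁅a, ⁅b, x⁆⁆ + ⁅b, ⁅x, a⁆⁆ = 0 := lie_jacobi x a b
        rw [← h2] at h1
        have h3 : ⁅σ x, ⁅a, b⁆⁆ = ⁅x, ⁅a, b⁆⁆ :=
          add_right_cancel (add_right_cancel h1)
        rw [sub_lie, h3, sub_self]
      | zero => simp
      | add u v _ _ hu hv => rw [lie_add, hu, hv, add_zero]
      | smul c u _ hu => rw [lie_smul, hu, smul_zero]
    exact sub_eq_zero.mp (htrans i hi _ hd hz)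
  have hall : ∀ i : ℤ, ∀ x ∈ g i, σ x = x := by
    intro i x hx
    rcases le_or_gt 0 i with hi | hi
    · exact hpos i hi x hx
    · obtain ⟨n, hn, rfl⟩ : ∃ n : ℕ, 1 ≤ n ∧ i = -(n : ℤ) := by
        refine ⟨i.natAbs, by omega, by omega⟩
      exact hneg n hn x hx
  intro x
  have htop : (⨆ i, g i) = ⊤ := hint.submodule_iSup_eq_top
  have hle : (⨆ i, g i) ≤ LinearMap.eqLocus σ LinearMap.id := by
    refine iSup_le fun i y hy => ?_
    exact hall i y hy
  have : x ∈ LinearMap.eqLocus σ LinearMap.id := hle (htop ▸ Submodule.mem_top)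
  exact this
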